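/- Let (X, d) be a metric space, let S₁, S₂ be finite sets of agents with representatives r₁, r₂ ∈ X, and suppose nonnegative reals d_k are assigned to agents a_k. Assume that for every agent a_i ∈ S₁, d(a_i, r₁) ≤ -d_i + 2^λ₁ · Σ_{a_k ∈ S₁} d_k, and that there exists a point b ∈ X with d(r₁, b) ≤ 2^λ₁ · Σ_{a_k ∈ S₁} d_k and d(b, r₂) ≤ 2^λ₂ · Σ_{a_k ∈ S₂} d_k, where λ₁ ≤ λ₂. Then for every a_i ∈ S₁, d(a_i, r₂) ≤ -d_i + 2^(max (λ₁+1) λ₂) · Σ_{a_k ∈ S₁ ∪ S₂} d_k. -/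
import Mathlib

/-- Merge step invariant of the RepMatch mechanism. -/
theorem stmt2 {X : Type*} [MetricSpace X] [DecidableEq X] (S1 S2 : Finset X) (hdisj : Disjoint S1 S2)
    (r1 r2 b : X) (dd : X → ℝ) (hdd : ∀ a, 0 ≤ dd a) (l1 l2 : ℕ) (hl : l1 ≤ l2)
    (h1 : ∀ a ∈ S1, dist a r1 ≤ -dd a + (2 : ℝ) ^ l1 * ∑ k ∈ S1, dd k)
    (hb1 : dist r1 b ≤ (2 : ℝ) ^ l1 * ∑ k ∈ S1, dd k)
    (hb2 : dist b r2 ≤ (2 : ℝ) ^ l2 * ∑ k ∈ S2, dd k) :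
    ∀ a ∈ S1, dist a r2 ≤ -dd a + (2 : ℝ) ^ max (l1 + 1) l2 * ∑ k ∈ S1 ∪ S2, dd k := by
  intro a ha
  have hsum := Finset.sum_union hdisj (f := dd)
  have hs1 : (0:ℝ) ≤ ∑ k ∈ S1, dd k := Finset.sum_nonneg fun k _ => hdd k
  have hs2 : (0:ℝ) ≤ ∑ k ∈ S2, dd k := Finset.sum_nonneg fun k _ => hdd k
  have htri : dist a r2 ≤ dist a r1 + dist r1 b + dist b r2 :=
    (dist_triangle a r1 r2).trans (by linarith [dist_triangle r1 b r2])
  have h1' := h1 a ha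
  have hp1 : (2:ℝ)^l1 + (2:ℝ)^l1 ≤ (2:ℝ)^(max (l1+1) l2) := by
    have : (2:ℝ)^(l1+1) ≤ (2:ℝ)^(max (l1+1) l2) :=
      pow_le_pow_right₀ one_le_two (le_max_left _ _)
    rw [pow_succ] at this; linarith
  have hp2 : (2:ℝ)^l2 ≤ (2:ℝ)^(max (l1+1) l2) :=
    pow_le_pow_right₀ one_le_two (le_max_right _ _)
  rw [hsum]
  nlinarith [mul_le_mul_of_nonneg_right hp2 hs2, mul_le_mul_of_nonneg_right hp1 hs1]
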